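/- The expected number of random elements needed to generate the direct product of a cyclic group of order 2 with the symmetric group on 3 points is e((ℤ/2ℤ) × Sym(3)) = 1181/330. -/
import Mathlib


/-- The probability that `k` uniformly random elements of `G` generate `G`. -/
noncomputable def genProb (G : Type*) [Group G] (k : ℕ) : ℝ :=
  (Nat.card {v : Fin k → G // Subgroup.closure (Set.range v) = ⊤} : ℝ) /
    (Nat.card G : ℝ) ^ k

/-- `egen G = ∑_{k ≥ 0} (1 - P_G(k))`, the expected number of random elements needed to
generate `G`. -/
noncomputable def egen (G : Type*) [Group G] : ℝ :=
  ∑' k : ℕ, (1 - genProb G k)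


open Subgroup Set

abbrev GG : Type := Multiplicative (ZMod 2) × Equiv.Perm (Fin 3)

namespace EgenAux

def a : GG := (Multiplicative.ofAdd 1, 1)
def s0 : GG := (1, Equiv.swap 0 1)
def s1 : GG := (1, Equiv.swap 0 2)
def s2 : GG := (1, Equiv.swap 1 2)
def r : GG := (1, Equiv.swap 0 1 * Equiv.swap 0 2)
def r2 : GG := r * r

def carr : Fin 16 → Finset GG :=
  ![{1}, {1, a}, {1, s0}, {1, s1}, {1, s2}, {1, a*s0}, {1, a*s1}, {1, a*s2},
    {1, r, r2},
    {1, a, s0, a*s0}, {1, a, s1, a*s1}, {1, a, s2, a*s2},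
    {1, r, r2, a, a*r, a*r2},
    {1, r, r2, s0, s1, s2},
    {1, r, r2, a*s0, a*s1, a*s2},
    Finset.univ]

def coef : Fin 16 → ℤ :=
  ![-6, 3, 1, 1, 1, 1, 1, 1, 2, -1, -1, -1, -1, -1, -1, 1]

def S (b1 b2 b3 b4 b5 b6 b7 b8 b9 b10 b11 : Bool) : Finset GG :=
  {1} ∪ (cond b1 {a} ∅) ∪ (cond b2 {s0} ∅) ∪ (cond b3 {s1} ∅) ∪ (cond b4 {s2} ∅)
    ∪ (cond b5 {a*s0} ∅) ∪ (cond b6 {a*s1} ∅) ∪ (cond b7 {a*s2} ∅)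
    ∪ (cond b8 {r} ∅) ∪ (cond b9 {r2} ∅) ∪ (cond b10 {a*r} ∅) ∪ (cond b11 {a*r2} ∅)

set_option maxRecDepth 100000
set_option maxHeartbeats 4000000
set_option synthInstance.maxSize 4096

theorem L : ∀ b1 b2 b3 b4 b5 b6 b7 b8 b9 b10 b11 : Bool,
    (∀ x ∈ S b1 b2 b3 b4 b5 b6 b7 b8 b9 b10 b11, ∀ y ∈ S b1 b2 b3 b4 b5 b6 b7 b8 b9 b10 b11,
      x * y⁻¹ ∈ S b1 b2 b3 b4 b5 b6 b7 b8 b9 b10 b11) →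
    ∃ j : Fin 16, S b1 b2 b3 b4 b5 b6 b7 b8 b9 b10 b11 = carr j := by decide

theorem hone : ∀ j : Fin 16, (1:GG) ∈ carr j := by decide
theorem hmul : ∀ j : Fin 16, ∀ x ∈ carr j, ∀ y ∈ carr j, x * y ∈ carr j := by decide
theorem hinv : ∀ j : Fin 16, ∀ x ∈ carr j, x⁻¹ ∈ carr j := by decide

def Hj (j : Fin 16) : Subgroup GG where
  carrier := carr j
  one_mem' := hone j
  mul_mem' := fun hx hy => hmul _ _ hx _ hy
  inv_mem' := fun hx => hinv _ _ hx

lemma mem_Hj {x : GG} {j : Fin 16} : x ∈ Hj j ↔ x ∈ carr j := Iff.rfl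

lemma mem_cond (b : Bool) (g x : GG) : x ∈ (cond b ({g} : Finset GG) ∅) ↔ (b = true ∧ x = g) := by
  cases b <;> simp

lemma hx12 : ∀ x : GG, x = 1 ∨ x = a ∨ x = s0 ∨ x = s1 ∨ x = s2 ∨ x = a*s0 ∨ x = a*s1
    ∨ x = a*s2 ∨ x = r ∨ x = r2 ∨ x = a*r ∨ x = a*r2 := by decide

theorem classify (K : Subgroup GG) : ∃ j : Fin 16, K = Hj j := by
  classical
  set b1 := decide (a ∈ K) with hb1
  set b2 := decide (s0 ∈ K) with hb2
  set b3 := decide (s1 ∈ K) with hb3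
  set b4 := decide (s2 ∈ K) with hb4
  set b5 := decide (a*s0 ∈ K) with hb5
  set b6 := decide (a*s1 ∈ K) with hb6
  set b7 := decide (a*s2 ∈ K) with hb7
  set b8 := decide (r ∈ K) with hb8
  set b9 := decide (r2 ∈ K) with hb9
  set b10 := decide (a*r ∈ K) with hb10
  set b11 := decide (a*r2 ∈ K) with hb11
  have hS : ∀ x : GG, x ∈ S b1 b2 b3 b4 b5 b6 b7 b8 b9 b10 b11 ↔ x ∈ K := by
    intro x
    constructor
    · intro hx
      simp only [S, Finset.mem_union, Finset.mem_singleton, mem_cond, hb1, hb2, hb3, hb4, hb5,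
        hb6, hb7, hb8, hb9, hb10, hb11, decide_eq_true_eq, or_assoc] at hx
      rcases hx with rfl | ⟨h, rfl⟩ | ⟨h, rfl⟩ | ⟨h, rfl⟩ | ⟨h, rfl⟩ | ⟨h, rfl⟩ | ⟨h, rfl⟩
        | ⟨h, rfl⟩ | ⟨h, rfl⟩ | ⟨h, rfl⟩ | ⟨h, rfl⟩ | ⟨h, rfl⟩
      · exact K.one_mem
      all_goals exact h
    · intro hx
      rcases hx12 x with rfl | rfl | rfl | rfl | rfl | rfl | rfl | rfl | rfl | rfl | rfl | rfl
      all_goals simp [S, Finset.mem_union, hb1, hb2, hb3, hb4, hb5, hb6, hb7, hb8, hb9, hb10, hb11,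
        decide_eq_true hx]
  have hclosed : ∀ x ∈ S b1 b2 b3 b4 b5 b6 b7 b8 b9 b10 b11,
      ∀ y ∈ S b1 b2 b3 b4 b5 b6 b7 b8 b9 b10 b11,
      x * y⁻¹ ∈ S b1 b2 b3 b4 b5 b6 b7 b8 b9 b10 b11 := by
    intro x hx y hy
    rw [hS] at hx hy ⊢
    exact K.mul_mem hx (K.inv_mem hy)
  obtain ⟨j, hj⟩ := L b1 b2 b3 b4 b5 b6 b7 b8 b9 b10 b11 hclosed
  refine ⟨j, ?_⟩
  ext x
  rw [mem_Hj, ← hj, hS]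

theorem key : ∀ j0 : Fin 16, (if carr j0 = Finset.univ then (1:ℤ) else 0)
    = ∑ j : Fin 16, coef j * (if carr j0 ⊆ carr j then 1 else 0) := by decide

end EgenAux
section Part2
open EgenAux Subgroup Set
open scoped Classical

lemma hpt (k : ℕ) (v : Fin k → GG) :
    (if Subgroup.closure (Set.range v) = ⊤ then (1:ℤ) else 0)
      = ∑ j : Fin 16, coef j * (if ∀ i, v i ∈ carr j then 1 else 0) := by
  classical
  obtain ⟨j0, hj0⟩ := classify (Subgroup.closure (Set.range v))
  have iff1 : (Subgroup.closure (Set.range v) = ⊤) ↔ carr j0 = Finset.univ := by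
    rw [hj0]
    rw [Subgroup.eq_top_iff']
    simp only [mem_Hj]
    exact (Finset.eq_univ_iff_forall).symm
  have iff2 : ∀ j : Fin 16, (∀ i, v i ∈ carr j) ↔ carr j0 ⊆ carr j := by
    intro j
    constructor
    · intro h x hx
      have hle : Subgroup.closure (Set.range v) ≤ Hj j := by
        rw [Subgroup.closure_le]
        rintro y ⟨i, rfl⟩
        exact h i
      rw [hj0] at hle
      exact hle hx
    · intro h i
      have : v i ∈ Subgroup.closure (Set.range v) := Subgroup.subset_closure ⟨i, rfl⟩
      rw [hj0] at this
      exact h this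
  rw [if_congr iff1 rfl rfl, key j0]
  refine Finset.sum_congr rfl fun j _ => ?_
  rw [if_congr (iff2 j) rfl rfl]

lemma count (k : ℕ) :
    (Nat.card {v : Fin k → GG // Subgroup.closure (Set.range v) = ⊤} : ℤ)
      = ∑ j : Fin 16, coef j * ((carr j).card : ℤ) ^ k := by
  classical
  rw [Nat.card_eq_fintype_card, Fintype.card_subtype, Finset.natCast_card_filter]
  rw [Finset.sum_congr rfl fun v _ => hpt k v]
  rw [Finset.sum_comm]
  refine Finset.sum_congr rfl fun j _ => ?_
  rw [← Finset.mul_sum, Finset.sum_boole]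
  congr 1
  have : (Finset.univ.filter fun v : Fin k → GG => ∀ i, v i ∈ carr j)
      = Fintype.piFinset (fun _ : Fin k => carr j) := by
    ext v
    simp [Fintype.mem_piFinset]
  rw [this]
  push_cast [Fintype.card_piFinset]
  simp

lemma count' (k : ℕ) :
    (Nat.card {v : Fin k → GG // Subgroup.closure (Set.range v) = ⊤} : ℤ)
      = 12^k - 3*6^k - 3*4^k + 2*3^k + 9*2^k - 6 := by
  have hc : ∀ j : Fin 16, (carr j).card = ![1,2,2,2,2,2,2,2,3,4,4,4,6,6,6,12] j := by decide
  rw [count]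
  simp only [hc]
  simp [Fin.sum_univ_succ, coef]
  ring

end Part2
section Part3
open EgenAux

lemma one_sub_genProb (k : ℕ) :
    1 - genProb (Multiplicative (ZMod 2) × Equiv.Perm (Fin 3)) k
      = 3*(1/2:ℝ)^k + 3*(1/3:ℝ)^k - 2*(1/4:ℝ)^k - 9*(1/6:ℝ)^k + 6*(1/12:ℝ)^k := by
  have hNr : (Nat.card {v : Fin k → GG // Subgroup.closure (Set.range v) = ⊤} : ℝ)
      = 12^k - 3*6^k - 3*4^k + 2*3^k + 9*2^k - 6 := by
    exact_mod_cast congrArg (Int.cast : ℤ → ℝ) (count' k)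
  have hG : (Nat.card (Multiplicative (ZMod 2) × Equiv.Perm (Fin 3)) : ℝ) = 12 := by
    rw [Nat.card_eq_fintype_card]
    norm_num [show Fintype.card GG = 12 from by decide]
  rw [genProb, hG, hNr]
  have h2 : (2:ℝ)^k ≠ 0 := by positivity
  have h3 : (3:ℝ)^k ≠ 0 := by positivity
  have e4 : (4:ℝ)^k = 2^k * 2^k := by rw [show (4:ℝ) = 2*2 by norm_num, mul_pow]
  have e6 : (6:ℝ)^k = 2^k * 3^k := by rw [show (6:ℝ) = 2*3 by norm_num, mul_pow]
  have e12 : (12:ℝ)^k = 2^k * (2^k * 3^k) := by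
    rw [show (12:ℝ) = 2*(2*3) by norm_num, mul_pow, mul_pow]
  have d2 : (1/2:ℝ)^k = 1/2^k := by rw [div_pow, one_pow]
  have d3 : (1/3:ℝ)^k = 1/3^k := by rw [div_pow, one_pow]
  have d4 : (1/4:ℝ)^k = 1/4^k := by rw [div_pow, one_pow]
  have d6 : (1/6:ℝ)^k = 1/6^k := by rw [div_pow, one_pow]
  have d12 : (1/12:ℝ)^k = 1/12^k := by rw [div_pow, one_pow]
  rw [d2, d3, d4, d6, d12, e4, e6, e12]
  field_simp
  ring

theorem egen_c2_times_sym3' :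
    egen (Multiplicative (ZMod 2) × Equiv.Perm (Fin 3)) = 1181 / 330 := by
  have s2 : Summable (fun k : ℕ => (1/2:ℝ)^k) :=
    summable_geometric_of_lt_one (by norm_num) (by norm_num)
  have s3 : Summable (fun k : ℕ => (1/3:ℝ)^k) :=
    summable_geometric_of_lt_one (by norm_num) (by norm_num)
  have s4 : Summable (fun k : ℕ => (1/4:ℝ)^k) :=
    summable_geometric_of_lt_one (by norm_num) (by norm_num)
  have s6 : Summable (fun k : ℕ => (1/6:ℝ)^k) :=
    summable_geometric_of_lt_one (by norm_num) (by norm_num)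
  have s12 : Summable (fun k : ℕ => (1/12:ℝ)^k) :=
    summable_geometric_of_lt_one (by norm_num) (by norm_num)
  rw [egen]
  rw [tsum_congr one_sub_genProb]
  have h : ∑' k : ℕ, (3*(1/2:ℝ)^k + 3*(1/3:ℝ)^k - 2*(1/4:ℝ)^k - 9*(1/6:ℝ)^k + 6*(1/12:ℝ)^k)
      = 3*(∑' k : ℕ, (1/2:ℝ)^k) + 3*(∑' k : ℕ, (1/3:ℝ)^k) - 2*(∑' k : ℕ, (1/4:ℝ)^k)
        - 9*(∑' k : ℕ, (1/6:ℝ)^k) + 6*(∑' k : ℕ, (1/12:ℝ)^k) := by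
    rw [Summable.tsum_add (((((s2.mul_left 3).add (s3.mul_left 3)).sub (s4.mul_left 2)).sub
        (s6.mul_left 9))) (s12.mul_left 6)]
    rw [Summable.tsum_sub (((s2.mul_left 3).add (s3.mul_left 3)).sub (s4.mul_left 2)) (s6.mul_left 9)]
    rw [Summable.tsum_sub ((s2.mul_left 3).add (s3.mul_left 3)) (s4.mul_left 2)]
    rw [Summable.tsum_add (s2.mul_left 3) (s3.mul_left 3)]
    rw [tsum_mul_left, tsum_mul_left, tsum_mul_left, tsum_mul_left, tsum_mul_left]
  rw [h, tsum_geometric_of_lt_one (by norm_num) (by norm_num),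
    tsum_geometric_of_lt_one (by norm_num) (by norm_num),
    tsum_geometric_of_lt_one (by norm_num) (by norm_num),
    tsum_geometric_of_lt_one (by norm_num) (by norm_num),
    tsum_geometric_of_lt_one (by norm_num) (by norm_num)]
  norm_num

end Part3

/-- `e((ℤ/2ℤ) × Sym(3)) = 1181/330`. -/
theorem egen_c2_times_sym3 :
    egen (Multiplicative (ZMod 2) × Equiv.Perm (Fin 3)) = 1181 / 330 :=
  egen_c2_times_sym3'
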